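/- Suppose G has highway dimension k (Definition 1) and SPC(r) is a locally s-sparse shortest path cover for scale r. Let r̃ and v satisfy 0 < r̃ < cr/2, and let W̃ be the set of all vertices h ∈ B_{c r̃}(v) ∩ SPC(r) for which there exists a shortest path P_h containing h, lying inside B_{c r̃}(v), with length in (r̃, cr/2]. Then |W̃| ≤ sk. -/

import Mathlib

open SimpleGraph

universe u

variable {V : Type u}

/-- The length of a walk in a graph `G` with edge lengths `len`. -/
noncomputable def wlen {G : SimpleGraph V} (len : V → V → ℝ) {u v : V} (w : G.Walk u v) : ℝ :=
  (w.darts.map (fun e => len e.toProd.1 e.toProd.2)).sum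

/-- A walk is a *shortest path* (w.r.t. the shortest-path metric `d`) if it is a
path whose total length equals the distance between its endpoints. -/
def IsShortestPath {G : SimpleGraph V} (len d : V → V → ℝ) {u v : V}
    (w : G.Walk u v) : Prop :=
  w.IsPath ∧ wlen len w = d u v

/-- `d` is the shortest-path metric of the graph `G` with edge lengths `len`:
it is a lower bound on the length of every walk, and for every pair of vertices it
is attained by some path (a shortest path). -/
def IsShortestPathMetric (G : SimpleGraph V) (len d : V → V → ℝ) : Prop :=
  (∀ (u v : V) (w : G.Walk u v), d u v ≤ wlen len w) ∧
  (∀ u v : V, ∃ w : G.Walk u v, IsShortestPath len d w)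

/-- The closed ball `B_r(v)` of radius `r` around `v` (w.r.t. `d`). -/
def cball (d : V → V → ℝ) (v : V) (r : ℝ) : Set V := {u | d u v ≤ r}

/-- A *shortest path cover* for scale `r` (with parameter `c`): a set of hubs
hitting every shortest path of length in `(r, c*r/2]`. -/
def IsSPC (G : SimpleGraph V) (len d : V → V → ℝ) (c r : ℝ) (H : Set V) : Prop :=
  ∀ (u v : V) (w : G.Walk u v), IsShortestPath len d w →
    r < wlen len w → wlen len w ≤ c * r / 2 → ∃ h ∈ H, h ∈ w.support

/-- A minimal shortest path cover: no proper subset is a shortest path cover. -/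
def IsMinimalSPC (G : SimpleGraph V) (len d : V → V → ℝ) (c r : ℝ) (H : Set V) : Prop :=
  IsSPC G len d c r H ∧ ∀ H' : Set V, H' ⊂ H → ¬ IsSPC G len d c r H'

/-- `H` is locally `s`-sparse for scale `r`: every ball of radius `c*r/2` contains
at most `s` vertices of `H`. -/
def LocallySparse (d : V → V → ℝ) (c r : ℝ) (s : ℕ) (H : Set V) : Prop :=
  ∀ v : V, (H ∩ cball d v (c * r / 2)).ncard ≤ s

/-- Definition 1: the highway dimension of `G` is at most `k` if for every scale
`r > 0` and every ball of radius `c*r`, there are at most `k` vertices in the ball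
hitting all shortest paths of length more than `r` that lie inside the ball. -/
def HighwayDimLE (G : SimpleGraph V) (len d : V → V → ℝ) (c : ℝ) (k : ℕ) : Prop :=
  ∀ r : ℝ, 0 < r → ∀ v : V, ∃ H : Set V, H ⊆ cball d v (c * r) ∧ H.ncard ≤ k ∧
    ∀ (a b : V) (w : G.Walk a b), IsShortestPath len d w →
      (∀ x ∈ w.support, x ∈ cball d v (c * r)) → r < wlen len w →
      ∃ h ∈ H, h ∈ w.support

lemma wlen_nonneg {G : SimpleGraph V} (len : V → V → ℝ)
    (hlen_pos : ∀ u v : V, G.Adj u v → 0 < len u v) {u v : V} (w : G.Walk u v) :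
    0 ≤ wlen len w := by
  apply List.sum_nonneg
  intro x hx
  simp only [List.mem_map] at hx
  obtain ⟨e, _, rfl⟩ := hx
  exact (hlen_pos _ _ e.adj).le

lemma wlen_append {G : SimpleGraph V} (len : V → V → ℝ) {u v w : V}
    (p : G.Walk u v) (q : G.Walk v w) :
    wlen len (p.append q) = wlen len p + wlen len q := by
  unfold wlen
  rw [Walk.darts_append, List.map_append, List.sum_append]

lemma wlen_reverse {G : SimpleGraph V} (len : V → V → ℝ)
    (hlen_symm : ∀ u v : V, len u v = len v u) {u v : V} (w : G.Walk u v) :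
    wlen len w.reverse = wlen len w := by
  unfold wlen
  rw [Walk.darts_reverse, List.map_reverse, List.sum_reverse, List.map_map]
  congr 1
  apply List.map_congr_left
  intro e _
  simp [Dart.symm_toProd, hlen_symm e.toProd.2 e.toProd.1]

lemma dist_le_wlen {G : SimpleGraph V} (len d : V → V → ℝ)
    (hlen_symm : ∀ u v : V, len u v = len v u)
    (hlen_pos : ∀ u v : V, G.Adj u v → 0 < len u v)
    (hd : ∀ (u v : V) (w : G.Walk u v), d u v ≤ wlen len w)
    {a b : V} (w : G.Walk a b) (h x : V) (hh : h ∈ w.support) (hx : x ∈ w.support) :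
    d h x ≤ wlen len w := by
  classical
  have hsplit : wlen len w = wlen len (w.takeUntil h hh) + wlen len (w.dropUntil h hh) := by
    conv_lhs => rw [← w.take_spec hh]
    exact wlen_append len _ _
  by_cases hx2 : x ∈ (w.dropUntil h hh).support
  · set p := w.dropUntil h hh with hp
    have h1 : d h x ≤ wlen len (p.takeUntil x hx2) := hd _ _ _
    have h2 : wlen len p = wlen len (p.takeUntil x hx2) + wlen len (p.dropUntil x hx2) := by
      conv_lhs => rw [← p.take_spec hx2]
      exact wlen_append len _ _
    have := wlen_nonneg len hlen_pos (p.dropUntil x hx2)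
    have := wlen_nonneg len hlen_pos (w.takeUntil h hh)
    linarith
  · have hx1 : x ∈ (w.takeUntil h hh).support := by
      have : x ∈ ((w.takeUntil h hh).append (w.dropUntil h hh)).support := by
        rw [w.take_spec hh]; exact hx
      rw [Walk.mem_support_append_iff] at this
      tauto
    set p := w.takeUntil h hh with hp
    have h1 : d h x ≤ wlen len (p.dropUntil x hx1).reverse := hd _ _ _
    rw [wlen_reverse len hlen_symm] at h1
    have h2 : wlen len p = wlen len (p.takeUntil x hx1) + wlen len (p.dropUntil x hx1) := by
      conv_lhs => rw [← p.take_spec hx1]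
      exact wlen_append len _ _
    have := wlen_nonneg len hlen_pos (p.takeUntil x hx1)
    have := wlen_nonneg len hlen_pos (w.dropUntil h hh)
    linarith

lemma ncard_biUnion_le' {α β : Type*} (t : Finset α) (f : α → Set β)
    (hf : ∀ a, (f a).Finite) :
    (⋃ a ∈ t, f a).ncard ≤ ∑ a ∈ t, (f a).ncard := by
  classical
  induction t using Finset.induction with
  | empty => simp
  | insert _ _ hx ih =>
    rename_i a t
    rw [Finset.set_biUnion_insert, Finset.sum_insert hx]
    exact le_trans (Set.ncard_union_le _ _) (add_le_add le_rfl ih)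

/-- Lemma 15 of the paper: let `G` have highway dimension `k`,
let `SPC(r)` be a locally `s`-sparse shortest path cover, let `0 < r̃ < c*r/2`, and
let `W̃` be the set of hubs `h ∈ B_{c*r̃}(v) ∩ SPC(r)` lying on some shortest path
that lies inside `B_{c*r̃}(v)` and has length in `(r̃, c*r/2]`. Then `|W̃| ≤ s*k`. -/
theorem statement8 {V : Type} [Fintype V] (G : SimpleGraph V) (len d : V → V → ℝ)
    (hlen_symm : ∀ u v : V, len u v = len v u)
    (hlen_pos : ∀ u v : V, G.Adj u v → 0 < len u v)
    (hmetric : IsShortestPathMetric G len d)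
    (c : ℝ) (hc : 4 ≤ c) (r : ℝ) (hr : 0 < r)
    (rt : ℝ) (hrt : 0 < rt) (hrtlt : rt < c * r / 2)
    (k s : ℕ) (hHD : HighwayDimLE G len d c k)
    (H : Set V) (hH : IsSPC G len d c r H)
    (hsparse : LocallySparse d c r s H)
    (v : V) :
    ({h : V | h ∈ cball d v (c * rt) ∧ h ∈ H ∧
        ∃ (a b : V) (w : G.Walk a b), IsShortestPath len d w ∧ h ∈ w.support ∧
          (∀ x ∈ w.support, x ∈ cball d v (c * rt)) ∧
          rt < wlen len w ∧ wlen len w ≤ c * r / 2}).ncard ≤ s * k := by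
    classical
  obtain ⟨H', hH'sub, hH'card, hH'hit⟩ := hHD rt hrt v
  have hfin : H'.Finite := Set.toFinite _
  have hsub : {h : V | h ∈ cball d v (c * rt) ∧ h ∈ H ∧
        ∃ (a b : V) (w : G.Walk a b), IsShortestPath len d w ∧ h ∈ w.support ∧
          (∀ x ∈ w.support, x ∈ cball d v (c * rt)) ∧
          rt < wlen len w ∧ wlen len w ≤ c * r / 2} ⊆
      ⋃ x ∈ hfin.toFinset, (H ∩ cball d x (c * r / 2)) := by
    rintro h ⟨hball, hhH, a, b, w, hsp, hmem, hin, hlong, hshort⟩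
    obtain ⟨x, hxH', hxw⟩ := hH'hit a b w hsp hin hlong
    refine Set.mem_biUnion (hfin.mem_toFinset.mpr hxH') ⟨hhH, ?_⟩
    exact le_trans (dist_le_wlen len d hlen_symm hlen_pos hmetric.1 w h x hmem hxw) hshort
  calc ({h : V | h ∈ cball d v (c * rt) ∧ h ∈ H ∧
        ∃ (a b : V) (w : G.Walk a b), IsShortestPath len d w ∧ h ∈ w.support ∧
          (∀ x ∈ w.support, x ∈ cball d v (c * rt)) ∧
          rt < wlen len w ∧ wlen len w ≤ c * r / 2}).ncard
      ≤ (⋃ x ∈ hfin.toFinset, (H ∩ cball d x (c * r / 2))).ncard :=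
        Set.ncard_le_ncard hsub (Set.toFinite _)
    _ ≤ ∑ x ∈ hfin.toFinset, (H ∩ cball d x (c * r / 2)).ncard :=
        ncard_biUnion_le' _ _ (fun _ => Set.toFinite _)
    _ ≤ ∑ _x ∈ hfin.toFinset, s := Finset.sum_le_sum (fun x _ => hsparse x)
    _ = hfin.toFinset.card * s := by rw [Finset.sum_const, smul_eq_mul]
    _ ≤ k * s := Nat.mul_le_mul_right s
        (by rw [← Set.ncard_eq_toFinset_card _ hfin]; exact hH'card)
    _ = s * k := Nat.mul_comm k s
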